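/- For all natural numbers l ≥ 1 and k, Σ over pairs (l₁,l₂) with l₁+l₂ = l−1 and triples (k₁,k₂,k₃) with k₁+k₂+k₃ = k of [2^{k₃}/k₃!] · [(l₁+k₁)!/(l₁! k₁!)] · [(l₂+k₂)!/(l₂! k₂!)] · [k!(l−1)!/((l+k−1)!)] ≤ e² (l+k)!. -/

import Mathlib

open Finset

lemma choose_mul_choose_le_aux (a b c d : ℕ) :
    (a + b).choose a * (c + d).choose c ≤ ((a + c) + (b + d)).choose (a + c) := by
  have h : (a + c) + (b + d) = (a + b) + (c + d) := by ring
  rw [h]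
  conv_rhs => rw [Nat.add_choose_eq]
  exact Finset.single_le_sum (f := fun ij => (a + b).choose ij.1 * (c + d).choose ij.2)
    (fun i _ => Nat.zero_le _) (show ((a, c) : ℕ × ℕ) ∈ antidiagonal (a + c) by simp)

theorem double_multinomial_estimate (l k : ℕ) (hl : 1 ≤ l) :
    ∑ l₁ ∈ Finset.range l, ∑ k₁ ∈ Finset.range (k + 1), ∑ k₂ ∈ Finset.range (k + 1 - k₁),
        (2 ^ (k - k₁ - k₂) / ((k - k₁ - k₂).factorial : ℝ))
          * (((l₁ + k₁).factorial : ℝ) / ((l₁.factorial : ℝ) * (k₁.factorial : ℝ)))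
          * ((((l - 1 - l₁) + k₂).factorial : ℝ)
              / (((l - 1 - l₁).factorial : ℝ) * (k₂.factorial : ℝ)))
          * ((k.factorial : ℝ) * ((l - 1).factorial : ℝ) / ((l + k - 1).factorial : ℝ))
      ≤ Real.exp 2 * ((l + k).factorial : ℝ) := by
  obtain ⟨n, rfl⟩ : ∃ n, l = n + 1 := ⟨l - 1, by omega⟩
  simp only [show n + 1 - 1 = n from rfl, show n + 1 + k - 1 = n + k by omega]
  have key : ∀ l₁ k₁ k₂ : ℕ, l₁ ≤ n → k₁ + k₂ ≤ k →
      (((l₁ + k₁).factorial : ℝ) / ((l₁.factorial : ℝ) * (k₁.factorial : ℝ)))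
        * ((((n - l₁) + k₂).factorial : ℝ)
            / (((n - l₁).factorial : ℝ) * (k₂.factorial : ℝ)))
        * ((k.factorial : ℝ) * ((n).factorial : ℝ) / ((n + k).factorial : ℝ)) ≤ 1 := by
    intro l₁ k₁ k₂ hl₁ hk
    set l₂ := n - l₁ with hl₂
    have hB : (((l₁ + k₁).factorial : ℝ) / ((l₁.factorial : ℝ) * (k₁.factorial : ℝ)))
        = ((l₁ + k₁).choose l₁ : ℝ) := (Nat.cast_add_choose (K := ℝ)).symm
    have hC : ((((l₂) + k₂).factorial : ℝ) / (((l₂).factorial : ℝ) * (k₂.factorial : ℝ)))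
        = ((l₂ + k₂).choose l₂ : ℝ) := (Nat.cast_add_choose (K := ℝ)).symm
    have hD : ((k.factorial : ℝ) * ((n).factorial : ℝ) / ((n + k).factorial : ℝ))
        = (((n + k).choose n : ℝ))⁻¹ := by
      rw [Nat.cast_add_choose (K := ℝ)]
      rw [inv_div]
      ring
    rw [hB, hC, hD]
    have hpos : (0 : ℝ) < ((n + k).choose n : ℝ) := by
      exact_mod_cast Nat.choose_pos (Nat.le_add_right n k)
    have hnat : (l₁ + k₁).choose l₁ * (l₂ + k₂).choose l₂ ≤ (n + k).choose n := by
      calc (l₁ + k₁).choose l₁ * (l₂ + k₂).choose l₂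
          ≤ ((l₁ + l₂) + (k₁ + k₂)).choose (l₁ + l₂) := choose_mul_choose_le_aux _ _ _ _
        _ = (n + (k₁ + k₂)).choose n := by rw [show l₁ + l₂ = n by omega]
        _ ≤ (n + k).choose n := Nat.choose_le_choose n (by omega)
    have hcast : ((l₁ + k₁).choose l₁ : ℝ) * ((l₂ + k₂).choose l₂ : ℝ) ≤ ((n + k).choose n : ℝ) := by
      exact_mod_cast hnat
    calc ((l₁ + k₁).choose l₁ : ℝ) * ((l₂ + k₂).choose l₂ : ℝ) * (((n + k).choose n : ℝ))⁻¹
        ≤ ((n + k).choose n : ℝ) * (((n + k).choose n : ℝ))⁻¹ := by gcongr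
      _ = 1 := mul_inv_cancel₀ (ne_of_gt hpos)
  have inner : ∀ k₁, k₁ ≤ k →
      ∑ k₂ ∈ Finset.range (k + 1 - k₁), (2 : ℝ) ^ (k - k₁ - k₂) / ((k - k₁ - k₂).factorial : ℝ)
        ≤ Real.exp 2 := by
    intro k₁ hk₁
    rw [show k + 1 - k₁ = (k - k₁) + 1 by omega]
    set m := k - k₁ with hm
    have hrefl := Finset.sum_range_reflect (fun j => (2 : ℝ) ^ j / (j.factorial : ℝ)) (m + 1)
    simp only [Nat.add_sub_cancel] at hrefl
    calc ∑ k₂ ∈ Finset.range (m + 1), (2 : ℝ) ^ (m - k₂) / ((m - k₂).factorial : ℝ)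
        = ∑ j ∈ Finset.range (m + 1), (2 : ℝ) ^ j / (j.factorial : ℝ) := hrefl
      _ ≤ Real.exp 2 := Real.sum_le_exp_of_nonneg (by norm_num) _
  calc ∑ l₁ ∈ Finset.range (n + 1), ∑ k₁ ∈ Finset.range (k + 1), ∑ k₂ ∈ Finset.range (k + 1 - k₁),
        (2 ^ (k - k₁ - k₂) / ((k - k₁ - k₂).factorial : ℝ))
          * (((l₁ + k₁).factorial : ℝ) / ((l₁.factorial : ℝ) * (k₁.factorial : ℝ)))
          * ((((n - l₁) + k₂).factorial : ℝ)
              / (((n - l₁).factorial : ℝ) * (k₂.factorial : ℝ)))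
          * ((k.factorial : ℝ) * ((n).factorial : ℝ) / ((n + k).factorial : ℝ))
      ≤ ∑ l₁ ∈ Finset.range (n + 1), ∑ k₁ ∈ Finset.range (k + 1), ∑ k₂ ∈ Finset.range (k + 1 - k₁),
          (2 : ℝ) ^ (k - k₁ - k₂) / ((k - k₁ - k₂).factorial : ℝ) := by
        apply Finset.sum_le_sum; intro l₁ hl₁
        apply Finset.sum_le_sum; intro k₁ hk₁
        apply Finset.sum_le_sum; intro k₂ hk₂
        simp only [Finset.mem_range] at hl₁ hk₁ hk₂
        have hA : (0 : ℝ) ≤ 2 ^ (k - k₁ - k₂) / ((k - k₁ - k₂).factorial : ℝ) := by positivity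
        have hkey := key l₁ k₁ k₂ (by omega) (by omega)
        calc (2 ^ (k - k₁ - k₂) / ((k - k₁ - k₂).factorial : ℝ))
              * (((l₁ + k₁).factorial : ℝ) / ((l₁.factorial : ℝ) * (k₁.factorial : ℝ)))
              * ((((n - l₁) + k₂).factorial : ℝ)
                  / (((n - l₁).factorial : ℝ) * (k₂.factorial : ℝ)))
              * ((k.factorial : ℝ) * ((n).factorial : ℝ) / ((n + k).factorial : ℝ))
            = (2 ^ (k - k₁ - k₂) / ((k - k₁ - k₂).factorial : ℝ))
              * ((((l₁ + k₁).factorial : ℝ) / ((l₁.factorial : ℝ) * (k₁.factorial : ℝ)))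
                * ((((n - l₁) + k₂).factorial : ℝ)
                    / (((n - l₁).factorial : ℝ) * (k₂.factorial : ℝ)))
                * ((k.factorial : ℝ) * ((n).factorial : ℝ) / ((n + k).factorial : ℝ))) := by ring
          _ ≤ (2 ^ (k - k₁ - k₂) / ((k - k₁ - k₂).factorial : ℝ)) * 1 :=
              mul_le_mul_of_nonneg_left hkey hA
          _ = 2 ^ (k - k₁ - k₂) / ((k - k₁ - k₂).factorial : ℝ) := mul_one _
    _ ≤ ∑ l₁ ∈ Finset.range (n + 1), ∑ k₁ ∈ Finset.range (k + 1), Real.exp 2 := by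
        apply Finset.sum_le_sum; intro l₁ _
        apply Finset.sum_le_sum; intro k₁ hk₁
        exact inner k₁ (by simpa using Nat.lt_succ_iff.mp (Finset.mem_range.mp hk₁))
    _ = ((n + 1 : ℕ) : ℝ) * (((k + 1 : ℕ) : ℝ) * Real.exp 2) := by
        simp [Finset.sum_const, Finset.card_range, mul_assoc]
    _ ≤ Real.exp 2 * ((n + 1 + k).factorial : ℝ) := by
        have hnat2 : (n + 1) * (k + 1) ≤ (n + 1 + k).factorial := by
          have h1 : k + 1 ≤ (n + 1 + k).choose k := by
            calc k + 1 = (k + 1).choose k := (Nat.choose_succ_self_right k).symm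
              _ ≤ (n + 1 + k).choose k := Nat.choose_le_choose k (by omega)
          have h2 : n + 1 ≤ (n + 1).factorial := Nat.self_le_factorial _
          have h3 : 1 ≤ k.factorial := Nat.one_le_iff_ne_zero.mpr k.factorial_ne_zero
          calc (n + 1) * (k + 1) = (k + 1) * (n + 1) * 1 := by ring
            _ ≤ (n + 1 + k).choose k * (n + 1).factorial * k.factorial :=
                Nat.mul_le_mul (Nat.mul_le_mul h1 h2) h3
            _ = (n + 1 + k).factorial := Nat.add_choose_mul_factorial_mul_factorial _ _
        have hcast : ((n + 1 : ℕ) : ℝ) * ((k + 1 : ℕ) : ℝ) ≤ ((n + 1 + k).factorial : ℝ) := by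
          exact_mod_cast hnat2
        calc ((n + 1 : ℕ) : ℝ) * (((k + 1 : ℕ) : ℝ) * Real.exp 2)
            = Real.exp 2 * (((n + 1 : ℕ) : ℝ) * ((k + 1 : ℕ) : ℝ)) := by ring
          _ ≤ Real.exp 2 * ((n + 1 + k).factorial : ℝ) := by
              exact mul_le_mul_of_nonneg_left hcast (Real.exp_pos 2).le
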